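/- Let f be convex differentiable with quadratic upper bound constant L₁ and minimizer x*. Assume ‖y − x*‖ < R for all y with f(y) ≤ f(x₀). Then the iterates of Random Pursuit with absolute line search accuracy μ satisfy, for all N ≥ 0: E[f(x_N) − f(x*)] ≤ Q/(N+1) + N L₁ μ²/2, where Q = max{2 n L₁ R², f(x₀) − f(x*)}. -/

import Mathlib

open MeasureTheory ProbabilityTheory
open scoped RealInnerProductSpace

noncomputable def flipIso (n : ℕ) (j : Fin n) : EuclideanSpace ℝ (Fin n) ≃ₗᵢ[ℝ] EuclideanSpace ℝ (Fin n) :=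
  LinearIsometryEquiv.piLpCongrRight 2 (fun i => if i = j then LinearIsometryEquiv.neg ℝ else LinearIsometryEquiv.refl ℝ ℝ)

lemma flipIso_apply {n : ℕ} (j : Fin n) (u : EuclideanSpace ℝ (Fin n)) (i : Fin n) :
    flipIso n j u i = if i = j then -(u i) else u i := by
  simp [flipIso, LinearIsometryEquiv.piLpCongrRight_apply]
  split <;> simp

noncomputable def swapIso (n : ℕ) (i j : Fin n) : EuclideanSpace ℝ (Fin n) ≃ₗᵢ[ℝ] EuclideanSpace ℝ (Fin n) :=
  LinearIsometryEquiv.piLpCongrLeft 2 ℝ ℝ (Equiv.swap i j)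

lemma swapIso_apply {n : ℕ} (i j k : Fin n) (u : EuclideanSpace ℝ (Fin n)) :
    swapIso n i j u k = u (Equiv.swap i j k) := by
  simp [swapIso, LinearIsometryEquiv.piLpCongrLeft_apply, Equiv.piCongrLeft']

lemma measurable_coord {n : ℕ} (i : Fin n) : Measurable (fun u : EuclideanSpace ℝ (Fin n) => u i) :=
  (measurable_pi_apply i).comp (WithLp.measurable_ofLp 2 _)

lemma abs_coord_le {n : ℕ} (u : EuclideanSpace ℝ (Fin n)) (i : Fin n) : |u i| ≤ ‖u‖ := by
  have h := abs_real_inner_le_norm (EuclideanSpace.single i (1:ℝ)) u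
  simpa [EuclideanSpace.inner_single_left, EuclideanSpace.norm_single] using h

lemma integrable_coord_mul {n : ℕ} (μs : Measure (EuclideanSpace ℝ (Fin n))) [IsProbabilityMeasure μs]
    (hsphere : ∀ᵐ u ∂μs, ‖u‖ = 1) (c : ℝ) (i j : Fin n) :
    Integrable (fun u : EuclideanSpace ℝ (Fin n) => c * (u i * u j)) μs := by
  apply Integrable.mono' (integrable_const |c|)
  · exact ((measurable_const.mul ((measurable_coord i).mul (measurable_coord j)))).aestronglyMeasurable
  · filter_upwards [hsphere] with u hu
    have hi : |u i| ≤ 1 := hu ▸ abs_coord_le u i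
    have hj : |u j| ≤ 1 := hu ▸ abs_coord_le u j
    rw [Real.norm_eq_abs, abs_mul, abs_mul]
    calc |c| * (|u i| * |u j|) ≤ |c| * 1 :=
          mul_le_mul_of_nonneg_left (mul_le_one₀ hi (abs_nonneg _) hj) (abs_nonneg c)
      _ = |c| := mul_one _

lemma sphere_inner_sq {n : ℕ} (hn : 0 < n) (μs : Measure (EuclideanSpace ℝ (Fin n)))
    [IsProbabilityMeasure μs]
    (hsphere : ∀ᵐ u ∂μs, ‖u‖ = 1)
    (hinv : ∀ e : EuclideanSpace ℝ (Fin n) ≃ₗᵢ[ℝ] EuclideanSpace ℝ (Fin n), μs.map e = μs)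
    (v : EuclideanSpace ℝ (Fin n)) :
    ∫ u, ⟪v, u⟫ ^ 2 ∂μs = ‖v‖ ^ 2 / n := by
  set B : Fin n → Fin n → ℝ := fun i j => ∫ u, u i * u j ∂μs with hB
  have hinv' : ∀ (T : EuclideanSpace ℝ (Fin n) ≃ₗᵢ[ℝ] EuclideanSpace ℝ (Fin n))
      (φ : EuclideanSpace ℝ (Fin n) → ℝ), Measurable φ →
      ∫ u, φ u ∂μs = ∫ u, φ (T u) ∂μs := by
    intro T φ hφ
    conv_lhs => rw [← hinv T]
    exact integral_map T.continuous.measurable.aemeasurable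
      (by rw [hinv T]; exact hφ.aestronglyMeasurable)
  have hmm : ∀ i j : Fin n, Measurable (fun u : EuclideanSpace ℝ (Fin n) => u i * u j) :=
    fun i j => (measurable_coord i).mul (measurable_coord j)
  have hoff : ∀ i j : Fin n, i ≠ j → B i j = 0 := by
    intro i j hij
    have h := hinv' (flipIso n j) (fun u => u i * u j) (hmm i j)
    simp only [flipIso_apply, if_neg hij, if_pos rfl, if_true, eq_self_iff_true, mul_neg, integral_neg] at h
    rw [hB]; simp only; linarith [h]
  have hdiag : ∀ i j : Fin n, B i i = B j j := by
    intro i j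
    have h := hinv' (swapIso n i j) (fun u => u i * u i) (hmm i i)
    simp only [swapIso_apply] at h
    rw [Equiv.swap_apply_left] at h
    exact h
  set c : ℝ := B ⟨0, hn⟩ ⟨0, hn⟩ with hc
  have hsum : (n : ℝ) * c = 1 := by
    have h1 : ∑ i : Fin n, B i i = ∫ u, ∑ i : Fin n, u i * u i ∂μs := by
      rw [integral_finset_sum]
      intro i _
      simpa using integrable_coord_mul μs hsphere 1 i i
    have h2 : ∫ u, ∑ i : Fin n, u i * u i ∂μs = 1 := by
      rw [show (1:ℝ) = ∫ _u : EuclideanSpace ℝ (Fin n), (1:ℝ) ∂μs by simp]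
      apply integral_congr_ae
      filter_upwards [hsphere] with u hu
      have : ⟪u, u⟫ = ∑ i : Fin n, u i * u i := by
        simp only [PiLp.inner_apply, RCLike.inner_apply, conj_trivial]
      rw [← this, real_inner_self_eq_norm_sq, hu]; ring
    have h3 : ∑ i : Fin n, B i i = (n : ℝ) * c := by
      rw [Finset.sum_congr rfl (fun i _ => hdiag i ⟨0, hn⟩)]
      simp [← hc, mul_comm]
    linarith [h1, h2, h3]
  have hexp : ∫ u, ⟪v, u⟫ ^ 2 ∂μs = ∑ i : Fin n, ∑ j : Fin n, v i * v j * B i j := by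
    have hpt : ∀ u : EuclideanSpace ℝ (Fin n),
        ⟪v, u⟫ ^ 2 = ∑ i : Fin n, ∑ j : Fin n, (v i * v j) * (u i * u j) := by
      intro u
      have : ⟪v, u⟫ = ∑ i : Fin n, v i * u i := by
        simp [PiLp.inner_apply, RCLike.inner_apply, conj_trivial, mul_comm]
      rw [this, sq, Finset.sum_mul_sum]
      apply Finset.sum_congr rfl; intro i _
      apply Finset.sum_congr rfl; intro j _
      ring
    simp_rw [hpt]
    rw [integral_finset_sum _ (fun i _ => integrable_finset_sum _
      (fun j _ => integrable_coord_mul μs hsphere (v i * v j) i j))]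
    apply Finset.sum_congr rfl; intro i _
    rw [integral_finset_sum _ (fun j _ => integrable_coord_mul μs hsphere (v i * v j) i j)]
    apply Finset.sum_congr rfl; intro j _
    rw [hB]
    exact integral_const_mul _ _
  rw [hexp]
  have : ∀ i : Fin n, ∑ j : Fin n, v i * v j * B i j = v i * v i * c := by
    intro i
    rw [Finset.sum_eq_single i]
    · rw [hdiag i ⟨0, hn⟩]
    · intro j _ hji; rw [hoff i j (Ne.symm hji), mul_zero]
    · intro h; exact absurd (Finset.mem_univ i) h
  rw [Finset.sum_congr rfl (fun i _ => this i)]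
  have hv : ∑ i : Fin n, v i * v i = ‖v‖ ^ 2 := by
    have : ⟪v, v⟫ = ∑ i : Fin n, v i * v i := by
      simp only [PiLp.inner_apply, RCLike.inner_apply, conj_trivial]
    rw [← this, real_inner_self_eq_norm_sq]
  rw [← Finset.sum_mul, hv]
  have hn' : (n : ℝ) ≠ 0 := Nat.cast_ne_zero.mpr hn.ne'
  have hc1 : c = 1 / (n : ℝ) := by rw [eq_div_iff hn']; linarith
  rw [hc1]; ring

-- derivative of f along a line
lemma line_hasDerivAt {f : EuclideanSpace ℝ (Fin n) → ℝ} {f' : EuclideanSpace ℝ (Fin n) → EuclideanSpace ℝ (Fin n)}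
    (hdiff : ∀ x, HasGradientAt f (f' x) x) (x u : EuclideanSpace ℝ (Fin n)) (t : ℝ) :
    HasDerivAt (fun s : ℝ => f (x + s • u)) ⟪f' (x + t • u), u⟫ t := by
  have hc : HasDerivAt (fun s : ℝ => x + s • u) u t := by
    simpa using ((hasDerivAt_id t).smul_const u).const_add x
  have hf := (hdiff (x + t • u)).hasFDerivAt
  have := hf.comp_hasDerivAt t hc
  simpa [InnerProductSpace.toDual_apply_apply, Function.comp_def] using this

lemma step_bound {f : EuclideanSpace ℝ (Fin n) → ℝ} {f' : EuclideanSpace ℝ (Fin n) → EuclideanSpace ℝ (Fin n)}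
    {L₁ : ℝ} (hL : 0 < L₁)
    (hdiff : ∀ x, HasGradientAt f (f' x) x)
    (hquad : ∀ x y, f y - f x - ⟪f' x, y - x⟫ ≤ L₁ / 2 * ‖y - x‖ ^ 2)
    {μ : ℝ} (hμ : 0 ≤ μ)
    (x u : EuclideanSpace ℝ (Fin n)) (hu : ‖u‖ = 1) (hs ht : ℝ)
    (hls : ∀ t : ℝ, f (x + hs • u) ≤ f (x + t • u))
    (happ : |ht - hs| ≤ μ) :
    f (x + ht • u) + ⟪f' x, u⟫ ^ 2 / (2 * L₁) ≤ f x + L₁ * μ ^ 2 / 2 := by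
  -- derivative zero at hs
  have hmin : IsLocalMin (fun s : ℝ => f (x + s • u)) hs :=
    Filter.Eventually.of_forall fun t => hls t
  have hzero : ⟪f' (x + hs • u), u⟫ = 0 :=
    hmin.hasDerivAt_eq_zero (line_hasDerivAt hdiff x u hs)
  -- (b) quadratic bound around x + hs u
  have hb : f (x + ht • u) ≤ f (x + hs • u) + L₁ * μ ^ 2 / 2 := by
    have h1 := hquad (x + hs • u) (x + ht • u)
    have hd : (x + ht • u) - (x + hs • u) = (ht - hs) • u := by
      rw [sub_smul]; abel
    rw [hd] at h1
    rw [inner_smul_right, hzero, mul_zero] at h1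
    have hn : ‖(ht - hs) • u‖ ^ 2 = (ht - hs) ^ 2 := by
      rw [norm_smul, hu, mul_one, Real.norm_eq_abs, sq_abs]
    rw [hn] at h1
    have hsq : (ht - hs) ^ 2 ≤ μ ^ 2 := by
      have := abs_nonneg (ht - hs)
      nlinarith [sq_abs (ht - hs)]
    nlinarith
  -- (c) line search gains
  have hc : f (x + hs • u) ≤ f x - ⟪f' x, u⟫ ^ 2 / (2 * L₁) := by
    set g := ⟪f' x, u⟫ with hg
    have h2 := hquad x (x + (-g / L₁) • u)
    have hd : (x + (-g / L₁) • u) - x = (-g / L₁) • u := by abel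
    rw [hd, inner_smul_right, ← hg] at h2
    have hn : ‖(-g / L₁) • u‖ ^ 2 = (-g / L₁) ^ 2 := by
      rw [norm_smul, hu, mul_one, Real.norm_eq_abs, sq_abs]
    rw [hn] at h2
    have h3 := hls (-g / L₁)
    have hL' : L₁ ≠ 0 := hL.ne'
    have : f (x + (-g / L₁) • u) ≤ f x - g ^ 2 / (2 * L₁) := by
      have e : -g / L₁ * g + L₁ / 2 * (-g / L₁) ^ 2 = - (g ^ 2 / (2 * L₁)) := by
        field_simp; ring
      nlinarith [h2]
    linarith
  linarith

lemma grad_lower {f : EuclideanSpace ℝ (Fin n) → ℝ} {f' : EuclideanSpace ℝ (Fin n) → EuclideanSpace ℝ (Fin n)}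
    (hdiff : ∀ x, HasGradientAt f (f' x) x)
    (hconv : ∀ x y, f x + ⟪f' x, y - x⟫ ≤ f y)
    {xstar x₀ : EuclideanSpace ℝ (Fin n)} (hmin : ∀ y, f xstar ≤ f y)
    {R : ℝ} (hR : ∀ y, f y ≤ f x₀ → ‖y - xstar‖ < R)
    (z : EuclideanSpace ℝ (Fin n)) :
    min (f z - f xstar) (f x₀ - f xstar) ≤ ‖f' z‖ * R := by
  have hR0 : 0 < R := by simpa using hR xstar (hmin x₀)
  by_cases hle : f z ≤ f x₀
  · have h1 : f z - f xstar ≤ ⟪f' z, z - xstar⟫ := by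
      have := hconv z xstar
      have e : ⟪f' z, xstar - z⟫ = -⟪f' z, z - xstar⟫ := by
        rw [← inner_neg_right, neg_sub]
      linarith [this, e.le, e.ge]
    have h2 : ⟪f' z, z - xstar⟫ ≤ ‖f' z‖ * ‖z - xstar‖ := real_inner_le_norm _ _
    have h3 : ‖f' z‖ * ‖z - xstar‖ ≤ ‖f' z‖ * R :=
      mul_le_mul_of_nonneg_left (hR z hle).le (norm_nonneg _)
    calc min (f z - f xstar) (f x₀ - f xstar) ≤ f z - f xstar := min_le_left _ _
      _ ≤ ‖f' z‖ * R := by linarith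
  · push_neg at hle
    rw [min_def, if_neg (by linarith)]
    -- f z > f x₀ case
    have hcont : ContinuousOn (fun t : ℝ => f (xstar + t • (z - xstar))) (Set.Icc 0 1) := by
      apply Continuous.continuousOn
      have hfc : Continuous f := by
        apply continuous_iff_continuousAt.mpr
        intro y
        exact (hdiff y).hasFDerivAt.continuousAt
      fun_prop
    have hivt := intermediate_value_Icc (by norm_num : (0:ℝ) ≤ 1) hcont
    have hmem : f x₀ ∈ Set.Icc (f (xstar + (0:ℝ) • (z - xstar))) (f (xstar + (1:ℝ) • (z - xstar))) := by
      simp only [zero_smul, add_zero, one_smul, add_sub_cancel]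
      exact ⟨hmin x₀, hle.le⟩
    obtain ⟨t, ht, hft⟩ := hivt hmem
    set z' := xstar + t • (z - xstar) with hz'
    have ht0 : 0 ≤ t := ht.1
    have ht1 : t ≤ 1 := ht.2
    have hfz' : f z' = f x₀ := hft
    have hzx : z' - xstar = t • (z - xstar) := by rw [hz']; abel
    have htR : t * ‖z - xstar‖ < R := by
      have := hR z' (le_of_eq hfz')
      rwa [hzx, norm_smul, Real.norm_eq_abs, abs_of_nonneg ht0] at this
    -- t < 1 (else f z = f x₀)
    have ht1' : t < 1 := by
      rcases lt_or_eq_of_le ht1 with h | h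
      · exact h
      · exfalso
        subst h
        rw [hz'] at hfz'
        simp only [one_smul, add_sub_cancel] at hfz'
        linarith
    -- key1 : δ₀ ≤ t * ⟪f' z', z - xstar⟫
    have key1 : f x₀ - f xstar ≤ t * ⟪f' z', z - xstar⟫ := by
      have h := hconv z' xstar
      have e : ⟪f' z', xstar - z'⟫ = -(t * ⟪f' z', z - xstar⟫) := by
        have : xstar - z' = -(t • (z - xstar)) := by rw [hz']; abel
        rw [this, inner_neg_right, inner_smul_right]
      rw [e] at h
      linarith [hfz' ▸ h]
    -- monotonicity: ⟪f' z - f' z', z - z'⟫ ≥ 0 gives ⟪f' z, z-x*⟫ ≥ ⟪f' z', z-x*⟫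
    have key2 : ⟪f' z', z - xstar⟫ ≤ ⟪f' z, z - xstar⟫ := by
      have h1 := hconv z z'
      have h2 := hconv z' z
      have e1 : z' - z = -((1 - t) • (z - xstar)) := by
        rw [hz', sub_smul, one_smul]; abel
      have e2 : z - z' = (1 - t) • (z - xstar) := by
        rw [hz', sub_smul, one_smul]; abel
      rw [e1, inner_neg_right, inner_smul_right] at h1
      rw [e2, inner_smul_right] at h2
      have hsum : (1 - t) * ⟪f' z', z - xstar⟫ ≤ (1 - t) * ⟪f' z, z - xstar⟫ := by linarith
      exact le_of_mul_le_mul_left (by linarith) (by linarith : (0:ℝ) < 1 - t)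
    have key3 : ⟪f' z, z - xstar⟫ ≤ ‖f' z‖ * ‖z - xstar‖ := real_inner_le_norm _ _
    -- combine
    have hmul : t * ⟪f' z, z - xstar⟫ ≤ ‖f' z‖ * (t * ‖z - xstar‖) := by
      have := mul_le_mul_of_nonneg_left (key3) ht0
      calc t * ⟪f' z, z - xstar⟫ ≤ t * (‖f' z‖ * ‖z - xstar‖) := this
        _ = ‖f' z‖ * (t * ‖z - xstar‖) := by ring
    have hfin : ‖f' z‖ * (t * ‖z - xstar‖) ≤ ‖f' z‖ * R :=
      mul_le_mul_of_nonneg_left htR.le (norm_nonneg _)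
    have hmono := mul_le_mul_of_nonneg_left key2 ht0
    linarith

lemma rec_bound (Q' Q : ℝ) (hQ' : 0 < Q') (hQ : Q' ≤ Q) (a M : ℕ → ℝ)
    (h0 : a 0 ≤ Q) (hM : ∀ k, 0 ≤ M k) (haM : ∀ k, a k ≤ M k)
    (hstep : ∀ k, a (k + 1) ≤ a k - M k ^ 2 / Q') :
    ∀ N, a N ≤ Q / (N + 1) := by
  have hQ0 : 0 < Q := lt_of_lt_of_le hQ' hQ
  intro N
  induction N with
  | zero => simpa using h0
  | succ k ih =>
    have hstep' := hstep k
    have hd : 0 ≤ M k ^ 2 / Q' := div_nonneg (sq_nonneg _) hQ'.le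
    have goalpos : (0:ℝ) < (k:ℝ) + 1 + 1 := by positivity
    rcases le_or_gt (a k) 0 with h | h
    · have : a (k + 1) ≤ 0 := by linarith
      have hpos : 0 ≤ Q / ((k:ℝ) + 1 + 1) := by positivity
      push_cast
      linarith
    · have hM2 : a k ^ 2 ≤ M k ^ 2 := by nlinarith [hM k, haM k]
      have h2 : a k ^ 2 / Q ≤ M k ^ 2 / Q' := by
        calc a k ^ 2 / Q ≤ a k ^ 2 / Q' := by gcongr
          _ ≤ M k ^ 2 / Q' := by gcongr
      have h1 : a (k + 1) ≤ a k - a k ^ 2 / Q := by linarith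
      have hk1 : a k * ((k:ℝ) + 1) ≤ Q := by
        have hkpos : (0:ℝ) < (k:ℝ) + 1 := by positivity
        have := ih
        calc a k * ((k:ℝ) + 1) ≤ (Q / ((k:ℝ) + 1)) * ((k:ℝ) + 1) := by
              apply mul_le_mul_of_nonneg_right _ hkpos.le
              push_cast at ih ⊢; linarith
          _ = Q := by field_simp
      -- show a k - a k ^2 / Q ≤ Q / (k+2)
      have key : a k - a k ^ 2 / Q ≤ Q / ((k:ℝ) + 1 + 1) := by
        have hc : (0:ℝ) < (k:ℝ) + 1 + 1 := by positivity
        have h3 : (a k - a k ^ 2 / Q) * (Q * ((k:ℝ) + 1 + 1)) ≤ Q * Q := by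
          have e : (a k - a k ^ 2 / Q) * (Q * ((k:ℝ) + 1 + 1))
              = (a k * Q - a k ^ 2) * ((k:ℝ) + 1 + 1) := by
            field_simp
          rw [e]
          nlinarith [mul_nonneg (mul_nonneg h.le (sub_nonneg.mpr hk1))
              (by positivity : (0:ℝ) ≤ (k:ℝ)), sq_nonneg (Q - ((k:ℝ) + 1) * a k),
            sq_nonneg (a k), sub_nonneg.mpr hk1]
        calc a k - a k ^ 2 / Q
            = ((a k - a k ^ 2 / Q) * (Q * ((k:ℝ) + 1 + 1))) / (Q * ((k:ℝ) + 1 + 1)) := by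
              field_simp
          _ ≤ (Q * Q) / (Q * ((k:ℝ) + 1 + 1)) :=
              div_le_div_of_nonneg_right h3 (by positivity)
          _ = Q / ((k:ℝ) + 1 + 1) := by
              rw [mul_div_mul_left _ _ hQ0.ne']
      push_cast
      push_cast at h1 key
      linarith

lemma jensen_sq {Ω : Type*} [MeasurableSpace Ω] (P : Measure Ω) [IsProbabilityMeasure P]
    (g : Ω → ℝ) (hg : Integrable g P) (hg2 : Integrable (fun ω => g ω ^ 2) P) :
    (∫ ω, g ω ∂P) ^ 2 ≤ ∫ ω, g ω ^ 2 ∂P := by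
  set m := ∫ ω, g ω ∂P with hm
  have h0 : 0 ≤ ∫ ω, (g ω - m) ^ 2 ∂P := integral_nonneg fun ω => sq_nonneg _
  have hexp : ∫ ω, (g ω - m) ^ 2 ∂P = ∫ ω, g ω ^ 2 ∂P - m ^ 2 := by
    have : ∀ ω, (g ω - m) ^ 2 = g ω ^ 2 - (2 * m) * g ω + m ^ 2 := fun ω => by ring
    simp_rw [this]
    have hint1 : Integrable (fun ω => g ω ^ 2 - 2 * m * g ω) P := hg2.sub (hg.const_mul (2*m))
    rw [integral_add hint1 (integrable_const _), integral_sub hg2 (hg.const_mul (2*m)),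
      integral_const_mul, integral_const]
    simp [← hm, measure_univ]
    ring
  linarith
lemma exp_identity {n : ℕ} (hn : 0 < n) (μs : Measure (EuclideanSpace ℝ (Fin n)))
    [IsProbabilityMeasure μs]
    (hsphere : ∀ᵐ u ∂μs, ‖u‖ = 1)
    (hinv : ∀ e : EuclideanSpace ℝ (Fin n) ≃ₗᵢ[ℝ] EuclideanSpace ℝ (Fin n), μs.map e = μs)
    {Ω : Type*} [MeasurableSpace Ω] (P : Measure Ω) [IsProbabilityMeasure P]
    (X U : Ω → EuclideanSpace ℝ (Fin n)) (hX : Measurable X) (hU : Measurable U)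
    (hlaw : P.map U = μs) (hindep : IndepFun X U P)
    (g : EuclideanSpace ℝ (Fin n) → EuclideanSpace ℝ (Fin n)) (hg : Measurable g)
    (C : ℝ) (hC : 0 ≤ C) (hb : ∀ᵐ ω ∂P, ‖g (X ω)‖ ≤ C) :
    ∫ ω, ⟪g (X ω), U ω⟫ ^ 2 ∂P = ∫ ω, ‖g (X ω)‖ ^ 2 / n ∂P := by
  set ν := P.map X with hν
  have : IsProbabilityMeasure ν := Measure.isProbabilityMeasure_map hX.aemeasurable
  have hbν : ∀ᵐ z ∂ν, ‖g z‖ ≤ C := by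
    rw [hν, ae_map_iff hX.aemeasurable (measurableSet_le (hg.norm) measurable_const)]
    exact hb
  have hpair : P.map (fun ω => (X ω, U ω)) = ν.prod μs := by
    rw [hν, ← hlaw]
    exact (indepFun_iff_map_prod_eq_prod_map_map hX.aemeasurable hU.aemeasurable).mp hindep
  set φ : EuclideanSpace ℝ (Fin n) × EuclideanSpace ℝ (Fin n) → ℝ :=
    fun p => ⟪g p.1, p.2⟫ ^ 2 with hφ
  have hφm : Measurable φ := by
    apply Measurable.pow _ measurable_const
    exact Measurable.inner (hg.comp measurable_fst) measurable_snd
  -- a.e. bound on the product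
  have hae1 : ∀ᵐ p ∂ν.prod μs, ‖g p.1‖ ≤ C := by
    rw [ae_iff]
    have hTm : MeasurableSet {z : EuclideanSpace ℝ (Fin n) | ¬ ‖g z‖ ≤ C} :=
      (measurableSet_le (hg.norm) measurable_const).compl
    have he : {p : EuclideanSpace ℝ (Fin n) × EuclideanSpace ℝ (Fin n) | ¬ ‖g p.1‖ ≤ C}
        = {z | ¬ ‖g z‖ ≤ C} ×ˢ Set.univ := by
      ext p; simp [Set.mem_prod]
    rw [he, Measure.prod_prod]
    rw [ae_iff] at hbν
    rw [hbν, zero_mul]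
  have hae2 : ∀ᵐ p ∂ν.prod μs, ‖(p.2 : EuclideanSpace ℝ (Fin n))‖ = 1 := by
    rw [ae_iff]
    have he : {p : EuclideanSpace ℝ (Fin n) × EuclideanSpace ℝ (Fin n) | ¬ ‖p.2‖ = 1}
        = Set.univ ×ˢ {u | ¬ ‖u‖ = 1} := by
      ext p; simp [Set.mem_prod]
    rw [he, Measure.prod_prod]
    rw [ae_iff] at hsphere
    rw [hsphere, mul_zero]
  have hint : Integrable φ (ν.prod μs) := by
    apply Integrable.mono' (integrable_const (C ^ 2)) hφm.aestronglyMeasurable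
    filter_upwards [hae1, hae2] with p h1 h2
    rw [Real.norm_eq_abs]
    calc |φ p| = ⟪g p.1, p.2⟫ ^ 2 := abs_of_nonneg (sq_nonneg _)
      _ = |⟪g p.1, p.2⟫| ^ 2 := (sq_abs _).symm
      _ ≤ (‖g p.1‖ * ‖p.2‖) ^ 2 :=
          pow_le_pow_left₀ (abs_nonneg _) (abs_real_inner_le_norm _ _) 2
      _ = ‖g p.1‖ ^ 2 := by rw [h2, mul_one]
      _ ≤ C ^ 2 := pow_le_pow_left₀ (norm_nonneg _) h1 2
  have hmeas2 : Measurable (fun z : EuclideanSpace ℝ (Fin n) => ‖g z‖ ^ 2 / n) :=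
    ((hg.norm.pow measurable_const).div_const _)
  calc ∫ ω, ⟪g (X ω), U ω⟫ ^ 2 ∂P
      = ∫ p, φ p ∂(ν.prod μs) := by
        rw [← hpair]
        exact (integral_map (hX.prodMk hU).aemeasurable
          (by rw [hpair]; exact hφm.aestronglyMeasurable)).symm
    _ = ∫ z, ∫ u, ⟪g z, u⟫ ^ 2 ∂μs ∂ν := integral_prod φ hint
    _ = ∫ z, ‖g z‖ ^ 2 / n ∂ν := by
        apply integral_congr_ae
        exact Filter.Eventually.of_forall fun z => sphere_inner_sq hn μs hsphere hinv (g z)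
    _ = ∫ ω, ‖g (X ω)‖ ^ 2 / n ∂P := by
        rw [hν]
        exact integral_map hX.aemeasurable
          (by exact (hmeas2.comp measurable_id).aestronglyMeasurable)

lemma measurable_grad {f : EuclideanSpace ℝ (Fin n) → ℝ}
    {f' : EuclideanSpace ℝ (Fin n) → EuclideanSpace ℝ (Fin n)}
    (hdiff : ∀ x, HasGradientAt f (f' x) x) : Measurable f' := by
  have he : f' = fun z => (InnerProductSpace.toDual ℝ (EuclideanSpace ℝ (Fin n))).symm
      (fderiv ℝ f z) := by
    funext z
    rw [(hdiff z).hasFDerivAt.fderiv]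
    simp
  rw [he]
  exact ((InnerProductSpace.toDual ℝ (EuclideanSpace ℝ (Fin n))).symm.continuous.measurable).comp
    (measurable_fderiv ℝ f)

lemma inner_sq_le {f : EuclideanSpace ℝ (Fin n) → ℝ}
    {f' : EuclideanSpace ℝ (Fin n) → EuclideanSpace ℝ (Fin n)} {L₁ : ℝ} (hL : 0 < L₁)
    (hquad : ∀ x y, f y - f x - ⟪f' x, y - x⟫ ≤ L₁ / 2 * ‖y - x‖ ^ 2)
    {xstar : EuclideanSpace ℝ (Fin n)} (hmin : ∀ y, f xstar ≤ f y)
    (z u : EuclideanSpace ℝ (Fin n)) (hu : ‖u‖ = 1) :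
    ⟪f' z, u⟫ ^ 2 ≤ 2 * L₁ * (f z - f xstar) := by
  set g := ⟪f' z, u⟫ with hg
  have h1 := hquad z (z + (-g / L₁) • u)
  have hd : (z + (-g / L₁) • u) - z = (-g / L₁) • u := by abel
  rw [hd, inner_smul_right, ← hg, norm_smul, hu, mul_one, Real.norm_eq_abs, sq_abs] at h1
  have h2 := hmin (z + (-g / L₁) • u)
  have hL' : L₁ ≠ 0 := hL.ne'
  have e : -g / L₁ * g + L₁ / 2 * (-g / L₁) ^ 2 = -(g ^ 2 / (2 * L₁)) := by
    field_simp; ring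
  have h3 : f xstar ≤ f z - g ^ 2 / (2 * L₁) := by nlinarith
  have : g ^ 2 / (2 * L₁) ≤ f z - f xstar := by linarith
  calc g ^ 2 = (g ^ 2 / (2 * L₁)) * (2 * L₁) := by field_simp
    _ ≤ (f z - f xstar) * (2 * L₁) := mul_le_mul_of_nonneg_right this (by linarith)
    _ = 2 * L₁ * (f z - f xstar) := by ring

lemma grad_norm_sq_le {f : EuclideanSpace ℝ (Fin n) → ℝ}
    {f' : EuclideanSpace ℝ (Fin n) → EuclideanSpace ℝ (Fin n)} {L₁ : ℝ} (hL : 0 < L₁)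
    (hquad : ∀ x y, f y - f x - ⟪f' x, y - x⟫ ≤ L₁ / 2 * ‖y - x‖ ^ 2)
    {xstar : EuclideanSpace ℝ (Fin n)} (hmin : ∀ y, f xstar ≤ f y)
    (z : EuclideanSpace ℝ (Fin n)) :
    ‖f' z‖ ^ 2 ≤ 2 * L₁ * (f z - f xstar) := by
  rcases eq_or_ne (f' z) 0 with h | h
  · rw [h]
    simp only [norm_zero]
    have := hmin z
    nlinarith
  · have hnz : ‖f' z‖ ≠ 0 := norm_ne_zero_iff.mpr h
    have hu : ‖(‖f' z‖⁻¹ • f' z)‖ = 1 := by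
      rw [norm_smul, norm_inv, norm_norm, inv_mul_cancel₀ hnz]
    have := inner_sq_le hL hquad hmin z _ hu
    rw [real_inner_smul_right, real_inner_self_eq_norm_sq] at this
    have e : ‖f' z‖⁻¹ * ‖f' z‖ ^ 2 = ‖f' z‖ := by field_simp
    rw [e] at this
    exact this
set_option maxHeartbeats 2000000 in
/-- O(1/k) convergence of Random Pursuit on general smooth convex functions:
E[f(x_N) − f(x*)] ≤ Q/(N+1) + N L₁ μ²/2 with Q = max{2nL₁R², f(x₀) − f(x*)}. -/
theorem rp_convergence_convex (n : ℕ) (hn : 0 < n)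
    (f : EuclideanSpace ℝ (Fin n) → ℝ)
    (f' : EuclideanSpace ℝ (Fin n) → EuclideanSpace ℝ (Fin n)) (L₁ : ℝ) (hL : 0 < L₁)
    (hdiff : ∀ x, HasGradientAt f (f' x) x)
    (hconv : ∀ x y, f x + ⟪f' x, y - x⟫ ≤ f y)
    (hquad : ∀ x y, f y - f x - ⟪f' x, y - x⟫ ≤ L₁ / 2 * ‖y - x‖ ^ 2)
    (xstar : EuclideanSpace ℝ (Fin n)) (hmin : ∀ y, f xstar ≤ f y)
    (μs : Measure (EuclideanSpace ℝ (Fin n))) [IsProbabilityMeasure μs]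
    (hsphere : ∀ᵐ u ∂μs, ‖u‖ = 1)
    (hinv : ∀ e : EuclideanSpace ℝ (Fin n) ≃ₗᵢ[ℝ] EuclideanSpace ℝ (Fin n), μs.map e = μs)
    (Ω : Type*) [MeasurableSpace Ω] (P : Measure Ω) [IsProbabilityMeasure P]
    (x u : ℕ → Ω → EuclideanSpace ℝ (Fin n)) (hstar htilde : ℕ → Ω → ℝ)
    (μ : ℝ) (hμ : 0 ≤ μ)
    (x₀ : EuclideanSpace ℝ (Fin n)) (hx0 : ∀ ω, x 0 ω = x₀)
    (R : ℝ) (hR : ∀ y, f y ≤ f x₀ → ‖y - xstar‖ < R)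
    (hxsucc : ∀ k ω, x (k + 1) ω = x k ω + htilde k ω • u k ω)
    (hls : ∀ k ω, ∀ t : ℝ, f (x k ω + hstar k ω • u k ω) ≤ f (x k ω + t • u k ω))
    (happ : ∀ k ω, |htilde k ω - hstar k ω| ≤ μ)
    (hmeasx : ∀ k, Measurable (x k)) (hmeasu : ∀ k, Measurable (u k))
    (hlaw : ∀ k, P.map (u k) = μs)
    (hindep : ∀ k, IndepFun (x k) (u k) P)
    (N : ℕ) :
    ∫ ω, (f (x N ω) - f xstar) ∂P ≤
      max (2 * n * L₁ * R ^ 2) (f x₀ - f xstar) / (N + 1) + N * L₁ * μ ^ 2 / 2 := by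
  classical
  have hcontf : Continuous f :=
    continuous_iff_continuousAt.mpr fun y => (hdiff y).hasFDerivAt.continuousAt
  have hmeasf' : Measurable f' := measurable_grad hdiff
  have hR0 : 0 < R := by simpa using hR xstar (hmin x₀)
  have hδ0 : 0 ≤ f x₀ - f xstar := by have := hmin x₀; linarith
  set c : ℝ := L₁ * μ ^ 2 / 2 with hc
  have hc0 : 0 ≤ c := by positivity
  set Q' : ℝ := 2 * n * L₁ * R ^ 2 with hQ'
  have hQ'0 : 0 < Q' := by
    have hnn : (0:ℝ) < (n:ℝ) := by exact_mod_cast hn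
    rw [hQ']; positivity
  set Q : ℝ := max Q' (f x₀ - f xstar) with hQdef
  have hQ'Q : Q' ≤ Q := le_max_left _ _
  -- unit norm a.e.
  have hunit : ∀ k, ∀ᵐ ω ∂P, ‖u k ω‖ = 1 := by
    intro k
    have h := hsphere
    rw [← hlaw k] at h
    exact (ae_map_iff (hmeasu k).aemeasurable
      (measurableSet_eq_fun continuous_norm.measurable measurable_const)).mp h
  -- pointwise step a.e.
  have hstepae : ∀ k, ∀ᵐ ω ∂P,
      f (x (k+1) ω) + ⟪f' (x k ω), u k ω⟫ ^ 2 / (2 * L₁) ≤ f (x k ω) + c := by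
    intro k
    filter_upwards [hunit k] with ω hω
    rw [hxsucc k ω, hc]
    exact step_bound hL hdiff hquad hμ (x k ω) (u k ω) hω (hstar k ω) (htilde k ω)
      (hls k ω) (happ k ω)
  -- upper bound on f (x k)
  have hub : ∀ k, ∀ᵐ ω ∂P, f (x k ω) ≤ f x₀ + k * c := by
    intro k
    induction k with
    | zero => exact Filter.Eventually.of_forall fun ω => by rw [hx0 ω]; simp
    | succ k ih =>
      filter_upwards [ih, hstepae k] with ω h1 h2
      have h3 : 0 ≤ ⟪f' (x k ω), u k ω⟫ ^ 2 / (2 * L₁) := by positivity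
      push_cast
      push_cast at h1
      linarith
  have hlb : ∀ k ω, f xstar ≤ f (x k ω) := fun k ω => hmin _
  have hmfx : ∀ k, Measurable fun ω => f (x k ω) := fun k => hcontf.measurable.comp (hmeasx k)
  have hIf : ∀ k, Integrable (fun ω => f (x k ω)) P := by
    intro k
    apply Integrable.mono' (integrable_const (|f xstar| + |f x₀| + k * c))
      (hmfx k).aestronglyMeasurable
    filter_upwards [hub k] with ω h1
    rw [Real.norm_eq_abs, abs_le]
    have hkc : 0 ≤ (k:ℝ) * c := by positivity
    constructor
    · have h2 := hlb k ω
      have h3 := neg_abs_le (f xstar)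
      have h4 := abs_nonneg (f x₀)
      linarith
    · have h5 := le_abs_self (f x₀)
      have h6 := abs_nonneg (f xstar)
      linarith
  -- min function
  set m : ℕ → Ω → ℝ := fun k ω => min (f (x k ω) - f xstar) (f x₀ - f xstar) with hm
  have hmeasm : ∀ k, Measurable (m k) :=
    fun k => ((hmfx k).sub measurable_const).min measurable_const
  have hm0 : ∀ k ω, 0 ≤ m k ω := by
    intro k ω
    apply le_min
    · have := hlb k ω; linarith
    · exact hδ0
  have hmδ : ∀ k ω, m k ω ≤ f x₀ - f xstar := fun k ω => min_le_right _ _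
  have hIm : ∀ k, Integrable (m k) P := by
    intro k
    apply Integrable.mono' (integrable_const (f x₀ - f xstar)) (hmeasm k).aestronglyMeasurable
    exact Filter.Eventually.of_forall fun ω => by
      rw [Real.norm_eq_abs, abs_of_nonneg (hm0 k ω)]; exact hmδ k ω
  have hIm2 : ∀ k, Integrable (fun ω => m k ω ^ 2) P := by
    intro k
    apply Integrable.mono' (integrable_const ((f x₀ - f xstar) ^ 2))
      (((hmeasm k).pow measurable_const).aestronglyMeasurable)
    exact Filter.Eventually.of_forall fun ω => by
      rw [Real.norm_eq_abs, abs_of_nonneg (sq_nonneg _)]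
      exact pow_le_pow_left₀ (hm0 k ω) (hmδ k ω) 2
  set M : ℕ → ℝ := fun k => ∫ ω, m k ω ∂P with hM
  have hM0 : ∀ k, 0 ≤ M k := fun k => integral_nonneg (hm0 k)
  set a : ℕ → ℝ := fun k => (∫ ω, f (x k ω) ∂P) - f xstar - k * c with ha
  -- a k ≤ M k
  have haM : ∀ k, a k ≤ M k := by
    intro k
    have hIfs : Integrable (fun ω => f (x k ω) - f xstar) P :=
      (hIf k).sub (integrable_const (f xstar))
    have hIfk : Integrable (fun ω => f (x k ω) - f xstar - (k:ℝ) * c) P :=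
      hIfs.sub (integrable_const ((k:ℝ) * c))
    have h1 : ∫ ω, (f (x k ω) - f xstar - (k:ℝ) * c) ∂P ≤ ∫ ω, m k ω ∂P := by
      apply integral_mono_ae hIfk (hIm k)
      filter_upwards [hub k] with ω hω
      have hkc : 0 ≤ (k:ℝ) * c := by positivity
      exact le_min (by linarith) (by linarith)
    have e1 : ∫ ω, (f (x k ω) - f xstar - (k:ℝ) * c) ∂P
        = (∫ ω, f (x k ω) ∂P) - f xstar - (k:ℝ) * c := by
      rw [integral_sub hIfs (integrable_const _),
          integral_sub (hIf k) (integrable_const (f xstar)), integral_const, integral_const]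
      simp [measure_univ]
    rw [e1] at h1
    rw [ha, hM]
    simp only
    linarith
  -- gradient norm bound a.e.
  set D : ℕ → ℝ := fun k => 2 * L₁ * (f x₀ - f xstar + k * c) with hD
  have hD0 : ∀ k, 0 ≤ D k := by
    intro k
    have hkc : 0 ≤ (k:ℝ) * c := by positivity
    rw [hD]; simp only
    nlinarith
  have hgb : ∀ k, ∀ᵐ ω ∂P, ‖f' (x k ω)‖ ≤ Real.sqrt (D k) := by
    intro k
    filter_upwards [hub k] with ω hω
    have h1 := grad_norm_sq_le hL hquad hmin (x k ω)
    have h2 : ‖f' (x k ω)‖ ^ 2 ≤ D k := by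
      rw [hD]; simp only; nlinarith
    have := Real.sqrt_le_sqrt h2
    rwa [Real.sqrt_sq (norm_nonneg _)] at this
  have hexp : ∀ k, ∫ ω, ⟪f' (x k ω), u k ω⟫ ^ 2 ∂P = ∫ ω, ‖f' (x k ω)‖ ^ 2 / n ∂P :=
    fun k => exp_identity hn μs hsphere hinv P (x k) (u k) (hmeasx k) (hmeasu k) (hlaw k)
      (hindep k) f' hmeasf' (Real.sqrt (D k)) (Real.sqrt_nonneg _) (hgb k)
  -- integrability of the inner-square and gradient-square terms
  have hmip : ∀ k, Measurable (fun ω => (⟪f' (x k ω), u k ω⟫ : ℝ) ^ 2) := by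
    intro k
    have h1 : Measurable (fun ω => (⟪f' (x k ω), u k ω⟫ : ℝ)) :=
      Measurable.inner (hmeasf'.comp (hmeasx k)) (hmeasu k)
    exact h1.pow measurable_const
  have hI2 : ∀ k, Integrable (fun ω => ⟪f' (x k ω), u k ω⟫ ^ 2) P := by
    intro k
    apply Integrable.mono' (integrable_const (D k)) ((hmip k).aestronglyMeasurable)
    filter_upwards [hunit k, hub k] with ω h1 h2
    rw [Real.norm_eq_abs, abs_of_nonneg (sq_nonneg _)]
    have h3 := abs_real_inner_le_norm (f' (x k ω)) (u k ω)
    rw [h1, mul_one] at h3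
    have h4 := grad_norm_sq_le hL hquad hmin (x k ω)
    have h5 : ‖f' (x k ω)‖ ^ 2 ≤ D k := by rw [hD]; simp only; nlinarith
    nlinarith [abs_nonneg (⟪f' (x k ω), u k ω⟫ : ℝ), sq_abs (⟪f' (x k ω), u k ω⟫ : ℝ),
      norm_nonneg (f' (x k ω))]
  have hI3 : ∀ k, Integrable (fun ω => ‖f' (x k ω)‖ ^ 2 / n) P := by
    intro k
    have hmg2 : Measurable (fun ω => ‖f' (x k ω)‖ ^ 2 / (n:ℝ)) := by
      have h1 : Measurable (fun ω => f' (x k ω)) := hmeasf'.comp (hmeasx k)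
      exact (h1.norm.pow measurable_const).div_const _
    apply Integrable.mono' (integrable_const (D k / n)) (hmg2.aestronglyMeasurable)
    filter_upwards [hub k] with ω h2
    have h4 := grad_norm_sq_le hL hquad hmin (x k ω)
    have h5 : ‖f' (x k ω)‖ ^ 2 ≤ D k := by rw [hD]; simp only; nlinarith
    rw [Real.norm_eq_abs, abs_of_nonneg (by positivity : (0:ℝ) ≤ ‖f' (x k ω)‖ ^ 2 / n)]
    have hnn : (0:ℝ) < (n:ℝ) := by exact_mod_cast hn
    gcongr
  -- the expected one-step decrease
  have hstepk : ∀ k, a (k+1) ≤ a k - M k ^ 2 / Q' := by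
    intro k
    have hnn : (0:ℝ) < (n:ℝ) := by exact_mod_cast hn
    have hIadd : Integrable (fun ω => f (x k ω) + c) P := (hIf k).add (integrable_const c)
    have hIrhs : Integrable
        (fun ω => f (x k ω) + c - ⟪f' (x k ω), u k ω⟫ ^ 2 / (2 * L₁)) P :=
      hIadd.sub ((hI2 k).div_const _)
    have h1 : ∫ ω, f (x (k+1) ω) ∂P ≤
        ∫ ω, (f (x k ω) + c - ⟪f' (x k ω), u k ω⟫ ^ 2 / (2 * L₁)) ∂P := by
      apply integral_mono_ae (hIf (k+1)) hIrhs
      filter_upwards [hstepae k] with ω h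
      linarith
    have e2 : ∫ ω, (f (x k ω) + c - ⟪f' (x k ω), u k ω⟫ ^ 2 / (2 * L₁)) ∂P
        = (∫ ω, f (x k ω) ∂P) + c - (∫ ω, ⟪f' (x k ω), u k ω⟫ ^ 2 ∂P) / (2 * L₁) := by
      rw [integral_sub hIadd ((hI2 k).div_const _),
          integral_add (hIf k) (integrable_const c), integral_const, integral_div]
      simp [measure_univ]
    rw [e2] at h1
    -- lower bound on the decrease term
    have h2 : M k ^ 2 / ((n:ℝ) * R ^ 2) ≤ ∫ ω, ⟪f' (x k ω), u k ω⟫ ^ 2 ∂P := by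
      rw [hexp k]
      have h3 : ∫ ω, m k ω ^ 2 / ((n:ℝ) * R ^ 2) ∂P ≤ ∫ ω, ‖f' (x k ω)‖ ^ 2 / n ∂P := by
        apply integral_mono_ae ((hIm2 k).div_const _) (hI3 k)
        apply Filter.Eventually.of_forall
        intro ω
        have h4 := grad_lower hdiff hconv hmin hR (x k ω)
        have h5 : m k ω ^ 2 ≤ ‖f' (x k ω)‖ ^ 2 * R ^ 2 := by
          have := hm0 k ω
          nlinarith [norm_nonneg (f' (x k ω))]
        rw [div_le_div_iff₀ (by positivity) hnn]
        nlinarith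
      have h4 : ∫ ω, m k ω ^ 2 / ((n:ℝ) * R ^ 2) ∂P
          = (∫ ω, m k ω ^ 2 ∂P) / ((n:ℝ) * R ^ 2) := integral_div _ _
      have h5 := jensen_sq P (m k) (hIm k) (hIm2 k)
      calc M k ^ 2 / ((n:ℝ) * R ^ 2) ≤ (∫ ω, m k ω ^ 2 ∂P) / ((n:ℝ) * R ^ 2) := by
            apply div_le_div_of_nonneg_right _ (by positivity)
            rw [hM]; exact h5
        _ = ∫ ω, m k ω ^ 2 / ((n:ℝ) * R ^ 2) ∂P := h4.symm
        _ ≤ ∫ ω, ‖f' (x k ω)‖ ^ 2 / n ∂P := h3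
    have hQ'e : M k ^ 2 / ((n:ℝ) * R ^ 2) / (2 * L₁) = M k ^ 2 / Q' := by
      rw [div_div, hQ']
      congr 1
      ring
    have h6 : M k ^ 2 / Q' ≤ (∫ ω, ⟪f' (x k ω), u k ω⟫ ^ 2 ∂P) / (2 * L₁) := by
      rw [← hQ'e]
      exact div_le_div_of_nonneg_right h2 (by positivity)
    rw [ha]; simp only
    push_cast
    linarith
  have ha0 : a 0 ≤ Q := by
    rw [ha]
    simp only [hx0, Nat.cast_zero, zero_mul, sub_zero]
    rw [integral_const]
    simp only [measure_univ, probReal_univ, ENNReal.toReal_one, one_smul, smul_eq_mul]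
    calc (1:ℝ) * f x₀ - f xstar = f x₀ - f xstar := by ring
      _ ≤ Q := le_max_right _ _
  have hrec := rec_bound Q' Q hQ'0 hQ'Q a M ha0 hM0 haM hstepk N
  have hfinal : ∫ ω, (f (x N ω) - f xstar) ∂P = a N + N * c := by
    rw [integral_sub (hIf N) (integrable_const (f xstar)), integral_const]
    simp only [measure_univ, probReal_univ, ENNReal.toReal_one, one_smul, smul_eq_mul]
    rw [ha]; simp only; ring
  rw [hfinal]
  have : (N:ℝ) * c = N * L₁ * μ ^ 2 / 2 := by rw [hc]; ring
  linarith [hrec]
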